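/- arXiv:2507.21515 — 2 statements merged into one kernel-verified Lean document; each statement's English description precedes it below -/
import Mathlib

section
/- Let e | q^r−1 with rad(e) = k·p_1···p_s where p_1,…,p_s are distinct primes not dividing k. Then N(e,A) ≥ (1−s)·N(k,A) + Σ_{i=1}^{s} N(k·p_i, A) for any A ⊆ F_{q^r}^*. -/
/-- γ is `e`-free: γ = β^d with d ∣ e implies d = 1. -/
def IsFreeElt {F : Type*} [Field F] (e : ℕ) (γ : Fˣ) : Prop :=
  ∀ (β : Fˣ) (d : ℕ), d ∣ e → γ = β ^ d → d = 1

/-- The number of `e`-free elements of `A`. -/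
noncomputable def nFree {F : Type*} [Field F] (e : ℕ) (A : Set Fˣ) : ℕ :=
  {γ ∈ A | IsFreeElt e γ}.ncard

/-- The radical (largest squarefree divisor) of `n`. -/
def radical (n : ℕ) : ℕ := n.primeFactors.prod id

lemma isFreeElt_iff_primes {F : Type*} [Field F] {m : ℕ} (hm : m ≠ 0) (γ : Fˣ) :
    IsFreeElt m γ ↔ ∀ ℓ, ℓ.Prime → ℓ ∣ m → ∀ β : Fˣ, γ ≠ β ^ ℓ := by
  constructor
  · intro h ℓ hℓ hdvd β hb
    exact hℓ.ne_one (h β ℓ hdvd hb)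
  · intro h β d hd hb
    by_contra hd1
    obtain ⟨ℓ, hℓp, c, rfl⟩ := Nat.exists_prime_and_dvd hd1
    exact h ℓ hℓp (dvd_trans (Dvd.intro c rfl) hd) (β ^ c)
      (by rw [hb, mul_comm, pow_mul])

lemma prime_dvd_radical_iff {m ℓ : ℕ} (hℓ : ℓ.Prime) :
    ℓ ∣ radical m ↔ ℓ ∈ m.primeFactors := by
  unfold radical
  rw [Prime.dvd_finset_prod_iff hℓ.prime]
  constructor
  · rintro ⟨a, ha, hd⟩
    have := (Nat.prime_dvd_prime_iff_eq hℓ (Nat.prime_of_mem_primeFactors ha)).mp hd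
    subst this; exact ha
  · intro h; exact ⟨ℓ, h, dvd_refl ℓ⟩

lemma ncard_iUnion_le {α : Type*} [Finite α] {n : ℕ} (C : Fin n → Set α) :
    (⋃ i, C i).ncard ≤ ∑ i, (C i).ncard := by
  induction n with
  | zero => simp
  | succ n ih =>
    rw [Fin.sum_univ_succ]
    have : (⋃ i, C i) = C 0 ∪ ⋃ i, C (Fin.succ i) := by
      ext x; simp [Fin.exists_fin_succ]
    rw [this]
    exact le_trans (Set.ncard_union_le _ _) (by gcongr; exact ih _)

theorem stmt_7 (q r : ℕ) (hq : IsPrimePow q) (hr : 1 ≤ r)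
    (F : Type*) [Field F] [Fintype F] (hF : Fintype.card F = q ^ r)
    (e : ℕ) (he : e ∣ q ^ r - 1) (s k : ℕ) (p : Fin s → ℕ)
    (hp : ∀ i, (p i).Prime) (hinj : Function.Injective p)
    (hpk : ∀ i, ¬ p i ∣ k) (hrad : radical e = k * ∏ i, p i) (A : Set Fˣ) :
    (nFree e A : ℝ) ≥ (1 - (s : ℝ)) * (nFree k A : ℝ) + ∑ i, (nFree (k * p i) A : ℝ) := by
  have hq2 : 2 ≤ q := hq.two_le
  have he0 : e ≠ 0 := by
    rintro rfl
    have : q ^ r - 1 = 0 := Nat.zero_dvd.mp he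
    have : 2 ≤ q ^ r := le_trans hq2 (Nat.le_self_pow (by omega) q)
    omega
  have hk0 : k ≠ 0 := by
    intro hk
    have : radical e ≠ 0 := Finset.prod_ne_zero_iff.mpr
      (fun a ha => (Nat.prime_of_mem_primeFactors ha).pos.ne')
    rw [hrad, hk, zero_mul] at this
    exact this rfl
  have hfin : Finite Fˣ := inferInstance
  -- characterize prime divisors of e
  have hprime_e : ∀ ℓ, ℓ.Prime → (ℓ ∣ e ↔ ℓ ∣ k ∨ ∃ i, ℓ = p i) := by
    intro ℓ hℓ
    have h1 : ℓ ∣ e ↔ ℓ ∣ radical e := by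
      rw [prime_dvd_radical_iff hℓ, Nat.mem_primeFactors]
      constructor
      · intro h; exact ⟨hℓ, h, he0⟩
      · tauto
    rw [h1, hrad, hℓ.prime.dvd_mul, Prime.dvd_finset_prod_iff hℓ.prime]
    constructor
    · rintro (h | ⟨i, _, hd⟩)
      · exact Or.inl h
      · exact Or.inr ⟨i, ((Nat.prime_dvd_prime_iff_eq hℓ (hp i)).mp hd)⟩
    · rintro (h | ⟨i, rfl⟩)
      · exact Or.inl h
      · exact Or.inr ⟨i, Finset.mem_univ i, dvd_refl _⟩
  -- key equivalences
  have hfree_e : ∀ γ : Fˣ, IsFreeElt e γ ↔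
      IsFreeElt k γ ∧ ∀ i, ∀ β : Fˣ, γ ≠ β ^ (p i) := by
    intro γ
    rw [isFreeElt_iff_primes he0, isFreeElt_iff_primes hk0]
    constructor
    · intro h
      refine ⟨fun ℓ hℓ hd => h ℓ hℓ ((hprime_e ℓ hℓ).mpr (Or.inl hd)),
        fun i => h (p i) (hp i) ((hprime_e (p i) (hp i)).mpr (Or.inr ⟨i, rfl⟩))⟩
    · rintro ⟨h1, h2⟩ ℓ hℓ hd
      rcases (hprime_e ℓ hℓ).mp hd with h | ⟨i, rfl⟩
      · exact h1 ℓ hℓ h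
      · exact h2 i
  have hfree_kp : ∀ i (γ : Fˣ), IsFreeElt (k * p i) γ ↔
      IsFreeElt k γ ∧ ∀ β : Fˣ, γ ≠ β ^ (p i) := by
    intro i γ
    have hkp0 : k * p i ≠ 0 := Nat.mul_ne_zero hk0 (hp i).pos.ne'
    rw [isFreeElt_iff_primes hkp0, isFreeElt_iff_primes hk0]
    constructor
    · intro h
      exact ⟨fun ℓ hℓ hd => h ℓ hℓ (hd.mul_right _),
        h (p i) (hp i) (dvd_mul_left _ _)⟩
    · rintro ⟨h1, h2⟩ ℓ hℓ hd
      rcases hℓ.prime.dvd_mul.mp hd with h | h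
      · exact h1 ℓ hℓ h
      · have := (Nat.prime_dvd_prime_iff_eq hℓ (hp i)).mp h
        subst this; exact h2
  -- sets
  set S : Set Fˣ := {γ ∈ A | IsFreeElt k γ} with hS
  set C : Fin s → Set Fˣ := fun i => {γ ∈ S | ∃ β : Fˣ, γ = β ^ (p i)} with hC
  have hCS : ∀ i, C i ⊆ S := fun i γ hγ => hγ.1
  have hTe : {γ ∈ A | IsFreeElt e γ} = S \ ⋃ i, C i := by
    ext γ
    simp only [Set.mem_setOf_eq, Set.mem_diff, Set.mem_iUnion, hC, hS, hfree_e γ]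
    constructor
    · rintro ⟨hA, h1, h2⟩
      exact ⟨⟨hA, h1⟩, by rintro ⟨i, _, β, rfl⟩; exact h2 i β rfl⟩
    · rintro ⟨⟨hA, h1⟩, h2⟩
      exact ⟨hA, h1, fun i β hb => h2 ⟨i, ⟨hA, h1⟩, β, hb⟩⟩
  have hTkp : ∀ i, {γ ∈ A | IsFreeElt (k * p i) γ} = S \ C i := by
    intro i
    ext γ
    simp only [Set.mem_setOf_eq, Set.mem_diff, hC, hS, hfree_kp i γ]
    constructor
    · rintro ⟨hA, h1, h2⟩
      exact ⟨⟨hA, h1⟩, by rintro ⟨_, β, rfl⟩; exact h2 β rfl⟩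
    · rintro ⟨⟨hA, h1⟩, h2⟩
      exact ⟨hA, h1, fun β hb => h2 ⟨⟨hA, h1⟩, β, hb⟩⟩
  -- cardinalities
  have hSn : nFree k A = S.ncard := rfl
  have hcard_kp : ∀ i, (nFree (k * p i) A : ℝ) = (nFree k A : ℝ) - ((C i).ncard : ℝ) := by
    intro i
    have h1 : nFree (k * p i) A = (S \ C i).ncard := congrArg Set.ncard (hTkp i)
    have hle : (C i).ncard ≤ S.ncard := Set.ncard_le_ncard (hCS i) (Set.toFinite S)
    rw [h1, Set.ncard_diff (hCS i) (Set.toFinite _), hSn]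
    push_cast [hle]
    ring
  have hcard_e : (nFree k A : ℝ) - ((⋃ i, C i).ncard : ℝ) ≤ (nFree e A : ℝ) := by
    have hsub : (⋃ i, C i) ⊆ S := Set.iUnion_subset hCS
    have h1 : nFree e A = (S \ ⋃ i, C i).ncard := congrArg Set.ncard hTe
    have hle : (⋃ i, C i).ncard ≤ S.ncard := Set.ncard_le_ncard hsub (Set.toFinite S)
    rw [h1, Set.ncard_diff hsub (Set.toFinite _), hSn]
    push_cast [hle]
    ring_nf
    exact le_refl _
  have hunion : ((⋃ i, C i).ncard : ℝ) ≤ ∑ i, ((C i).ncard : ℝ) := by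
    exact_mod_cast Nat.cast_le.mpr (ncard_iUnion_le C)
  calc (1 - (s : ℝ)) * (nFree k A : ℝ) + ∑ i, (nFree (k * p i) A : ℝ)
      = (nFree k A : ℝ) - ∑ i, ((C i).ncard : ℝ) := by
        rw [Finset.sum_congr rfl (fun i _ => hcard_kp i), Finset.sum_sub_distrib]
        simp [Finset.sum_const, Finset.card_univ]
        ring
    _ ≤ (nFree k A : ℝ) - ((⋃ i, C i).ncard : ℝ) := by linarith
    _ ≤ (nFree e A : ℝ) := hcard_e
end

section
/- Let e | q^r−1 with rad(e) = k·p_1···p_{s1}·l_1···l_{s2}, all primes distinct and coprime to k. With ε = Σ_{j=1}^{s2} 1/l_j, for any A ⊆ F_{q^r}^*: N(e,A) ≥ N(k p_1···p_{s1}, A) − ε·|A| + Σ_{j=1}^{s2} ( N(l_j,A) − (1 − 1/l_j)·|A| ). -/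
lemma ncard_biUnion_le' {α ι : Type*} (s : Finset ι) (f : ι → Set α)
    (hf : ∀ i, (f i).Finite) :
    (⋃ i ∈ s, f i).ncard ≤ ∑ i ∈ s, (f i).ncard := by
  classical
  induction s using Finset.induction with
  | empty => simp
  | insert a t h ih =>
    rw [Finset.sum_insert h]
    simp only [Finset.set_biUnion_insert]
    exact le_trans (Set.ncard_union_le _ _) (by omega)

theorem stmt_8 (q r : ℕ) (hq : IsPrimePow q) (hr : 1 ≤ r)
    (F : Type*) [Field F] [Fintype F] (hF : Fintype.card F = q ^ r)
    (e : ℕ) (he : e ∣ q ^ r - 1) (s₁ s₂ k : ℕ)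
    (p : Fin s₁ → ℕ) (l : Fin s₂ → ℕ)
    (hp : ∀ i, (p i).Prime) (hl : ∀ j, (l j).Prime)
    (hpinj : Function.Injective p) (hlinj : Function.Injective l)
    (hpl : ∀ i j, p i ≠ l j)
    (hpk : ∀ i, ¬ p i ∣ k) (hlk : ∀ j, ¬ l j ∣ k)
    (hrad : radical e = k * (∏ i, p i) * ∏ j, l j) (A : Set Fˣ) :
    (nFree e A : ℝ) ≥
      (nFree (k * ∏ i, p i) A : ℝ) - (∑ j, 1 / (l j : ℝ)) * (A.ncard : ℝ) +
        ∑ j, ((nFree (l j) A : ℝ) - (1 - 1 / (l j : ℝ)) * (A.ncard : ℝ)) := by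
  classical
  have hFin : Finite Fˣ := inferInstance
  have hfin : ∀ s : Set Fˣ, s.Finite := fun s => s.toFinite
  -- e ≠ 0
  have hqr : 1 ≤ q ^ r - 1 := by
    have : 2 ≤ q := hq.two_le
    have : 2 ≤ q ^ r := le_trans this (Nat.le_self_pow (by omega) q)
    omega
  have he0 : e ≠ 0 := by
    rintro rfl
    simp at he
    omega
  -- sets
  set S : Set Fˣ := {γ ∈ A | IsFreeElt e γ} with hS
  set B : Set Fˣ := {γ ∈ A | IsFreeElt (k * ∏ i, p i) γ} with hB
  set C : Fin s₂ → Set Fˣ := fun j => {γ ∈ A | IsFreeElt (l j) γ} with hC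
  -- key inclusion
  have hincl : B ⊆ S ∪ ⋃ j ∈ Finset.univ, (A \ C j) := by
    rintro γ ⟨hγA, hγB⟩
    by_cases hγS : IsFreeElt e γ
    · exact Or.inl ⟨hγA, hγS⟩
    · right
      simp only [IsFreeElt, not_forall] at hγS
      obtain ⟨β, d, hde, hβd, hd1⟩ := hγS
      have hd0 : d ≠ 0 := by rintro rfl; exact he0 (Nat.eq_zero_of_zero_dvd hde)
      obtain ⟨ℓ, hℓ, hℓd⟩ := Nat.exists_prime_and_dvd hd1
      have hℓe : ℓ ∣ e := hℓd.trans hde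
      have hℓrad : ℓ ∣ radical e :=
        Finset.dvd_prod_of_mem id (Nat.mem_primeFactors.mpr ⟨hℓ, hℓe, he0⟩)
      rw [hrad] at hℓrad
      -- γ is an ℓ-th power
      have hpow : γ = (β ^ (d / ℓ)) ^ ℓ := by
        rw [← pow_mul, Nat.div_mul_cancel hℓd, hβd]
      rcases (hℓ.prime.dvd_mul.mp hℓrad) with h1 | h2
      · exact absurd (hγB _ ℓ h1 hpow) hℓ.ne_one
      · obtain ⟨j, _, hj⟩ := hℓ.prime.exists_mem_finset_dvd h2
        have hℓj : ℓ = l j := ((Nat.prime_dvd_prime_iff_eq hℓ (hl j)).mp hj)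
        refine Set.mem_biUnion (Finset.mem_univ j) ⟨hγA, ?_⟩
        intro hmem
        exact hℓ.ne_one (hmem.2 _ ℓ (hℓj ▸ dvd_refl _) hpow)
  -- cardinality inequality
  have hcard : B.ncard ≤ S.ncard + ∑ j : Fin s₂, (A \ C j).ncard := by
    calc B.ncard ≤ (S ∪ ⋃ j ∈ Finset.univ, (A \ C j)).ncard :=
          Set.ncard_le_ncard hincl (hfin _)
      _ ≤ S.ncard + (⋃ j ∈ Finset.univ, (A \ C j)).ncard := Set.ncard_union_le _ _
      _ ≤ S.ncard + ∑ j : Fin s₂, (A \ C j).ncard := by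
          have := ncard_biUnion_le' (Finset.univ : Finset (Fin s₂))
            (fun j => A \ C j) (fun j => hfin _)
          exact Nat.add_le_add_left (by simpa using this) _
  have hCA : ∀ j, C j ⊆ A := fun j γ h => h.1
  have hdiff : ∀ j : Fin s₂, ((A \ C j).ncard : ℝ) = (A.ncard : ℝ) - (C j).ncard :=
    fun j => Set.cast_ncard_sdiff (hCA j) (hfin A)
  -- real inequality
  have hreal : (S.ncard : ℝ) ≥ (B.ncard : ℝ) + ∑ j : Fin s₂, ((C j).ncard : ℝ)
      - (s₂ : ℝ) * (A.ncard : ℝ) := by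
    have h1 : (B.ncard : ℝ) ≤ (S.ncard : ℝ) + ∑ j : Fin s₂, ((A \ C j).ncard : ℝ) := by
      push_cast
      exact_mod_cast hcard
    have h2 : ∑ j : Fin s₂, ((A \ C j).ncard : ℝ)
        = (s₂ : ℝ) * (A.ncard : ℝ) - ∑ j : Fin s₂, ((C j).ncard : ℝ) := by
      rw [Finset.sum_congr rfl fun j _ => hdiff j, Finset.sum_sub_distrib]
      simp [mul_comm]
    linarith [h1, h2.symm ▸ h1]
  -- unfold nFree and conclude
  show (S.ncard : ℝ) ≥ (B.ncard : ℝ) - (∑ j, 1 / (l j : ℝ)) * (A.ncard : ℝ)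
    + ∑ j, (((C j).ncard : ℝ) - (1 - 1 / (l j : ℝ)) * (A.ncard : ℝ))
  have hexp : ∑ j : Fin s₂, (((C j).ncard : ℝ) - (1 - 1 / (l j : ℝ)) * (A.ncard : ℝ))
      = ∑ j : Fin s₂, ((C j).ncard : ℝ) - (s₂ : ℝ) * (A.ncard : ℝ)
        + (∑ j, 1 / (l j : ℝ)) * (A.ncard : ℝ) := by
    rw [Finset.sum_sub_distrib]
    rw [Finset.sum_congr rfl (fun j _ => by ring :
      ∀ j ∈ Finset.univ, (1 - 1 / (l j : ℝ)) * (A.ncard : ℝ)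
        = (A.ncard : ℝ) - (1 / (l j : ℝ)) * (A.ncard : ℝ))]
    rw [Finset.sum_sub_distrib, Finset.sum_const, ← Finset.sum_mul]
    simp [mul_comm]
    ring
  rw [hexp]
  linarith
end
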